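/- arXiv:2105.12047 — 2 statements merged into one kernel-verified Lean document; each statement's English description precedes it below -/
import Mathlib

section
/- Let μ ∈ Γ_k ⊂ ℝ^n with 0 ≤ l < k ≤ n, and set G(μ) = (σ_k(μ)/σ_l(μ))^{1/(k-l)}. Then the sum of partial derivatives satisfies Σ_{i=1}^n ∂G/∂μ_i ≥ (C(n,k)/C(n,l))^{1/(k-l)}. -/
open Finset

/-- The `m`-th elementary symmetric polynomial of `μ : Fin n → ℝ`. -/
noncomputable def esymm (n m : ℕ) (μ : Fin n → ℝ) : ℝ :=
  ∑ s ∈ Finset.powersetCard m (Finset.univ : Finset (Fin n)), ∏ i ∈ s, μ i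

/-- The Hessian quotient operator `G(μ) = (σ_k(μ)/σ_l(μ))^{1/(k-l)}`. -/
noncomputable def Gq (n k l : ℕ) (μ : Fin n → ℝ) : ℝ :=
  (esymm n k μ / esymm n l μ) ^ ((((k : ℝ) - l))⁻¹)


open Polynomial

namespace NewtonAux

lemma esymm_cons (a : ℝ) (s : Multiset ℝ) (k : ℕ) :
    (a ::ₘ s).esymm (k+1) = s.esymm (k+1) + a * s.esymm k := by
  simp only [Multiset.esymm, Multiset.powersetCard_cons, Multiset.map_add, Multiset.sum_add]
  congr 1
  simp only [Multiset.map_map, Function.comp, Multiset.prod_cons]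
  rw [← Multiset.sum_map_mul_left]

lemma esymm_zero' (s : Multiset ℝ) : s.esymm 0 = 1 := by
  simp [Multiset.esymm]

lemma coeff_prod_one_sub (u : Multiset ℝ) (k : ℕ) :
    (u.map (fun r => 1 - C r * X)).prod.coeff k = (-1)^k * u.esymm k := by
  induction u using Multiset.induction_on generalizing k with
  | empty =>
      cases k with
      | zero => simp [esymm_zero']
      | succ k => simp [Multiset.esymm, coeff_one, Multiset.powersetCard_zero_right]
  | cons a s ih =>
      rw [Multiset.map_cons, Multiset.prod_cons]
      have expand : ((1 - C a * X) * (s.map (fun r => 1 - C r * X)).prod).coeff k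
          = (s.map (fun r => 1 - C r * X)).prod.coeff k
            - a * (X * (s.map (fun r => 1 - C r * X)).prod).coeff k := by
        rw [sub_mul, one_mul, Polynomial.coeff_sub, mul_assoc, coeff_C_mul]
      rw [expand]
      cases k with
      | zero =>
          simp only [mul_coeff_zero, coeff_X_zero, zero_mul, mul_zero, sub_zero]
          simp [esymm_zero', ih]
      | succ k =>
          rw [coeff_X_mul, ih, ih, esymm_cons]
          ring

lemma splits_prod_one_sub (u : Multiset ℝ) :
    ((u.map (fun r => 1 - C r * X)).prod).Splits := by
  refine Multiset.prod_induction _ _ (fun p q hp hq => Splits.mul hp hq) Splits.one ?_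
  intro p hp
  obtain ⟨r, _, rfl⟩ := Multiset.mem_map.1 hp
  refine Splits.of_natDegree_le_one ?_
  calc (1 - C r * X).natDegree ≤ max (1:ℝ[X]).natDegree (C r * X).natDegree :=
        natDegree_sub_le _ _
    _ ≤ 1 := by
        simp only [natDegree_one, max_le_iff]
        exact ⟨Nat.zero_le _, (natDegree_C_mul_le _ _).trans (by simp)⟩

lemma splits_derivative (p : ℝ[X]) (h : p.Splits) :
    (derivative p).Splits := by
  by_cases hd : derivative p = 0
  · rw [hd]; exact Splits.zero
  have hp0 : p ≠ 0 := by rintro rfl; simp at hd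
  have hdeg : p.natDegree ≠ 0 := by
    intro h0
    exact hd (by rw [Polynomial.eq_C_of_natDegree_eq_zero h0]; simp)
  have h1 : Multiset.card p.roots = p.natDegree := splits_iff_card_roots.1 h
  have h2 := Polynomial.card_roots_le_derivative p
  have h3 : Multiset.card (derivative p).roots ≤ (derivative p).natDegree :=
    (derivative p).card_roots' 
  have h4 : (derivative p).natDegree < p.natDegree := natDegree_derivative_lt hdeg
  rw [splits_iff_card_roots]
  omega

lemma splits_iterate_derivative (r : ℕ) (p : ℝ[X]) (h : p.Splits) :
    (derivative^[r] p).Splits := by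
  induction r with
  | zero => simpa
  | succ r ih => rw [Function.iterate_succ_apply']; exact splits_derivative _ ih

lemma quadratic_disc (q : ℝ[X]) (h : q.Splits) (hdeg : q.natDegree ≤ 2) :
    4 * (q.coeff 2 * q.coeff 0) ≤ (q.coeff 1)^2 := by
  by_cases h2 : q.coeff 2 = 0
  · rw [h2, zero_mul, mul_zero]; positivity
  have hd : q.natDegree = 2 := by
    by_contra hne
    exact h2 (coeff_eq_zero_of_natDegree_lt (by omega))
  have hq0 : q ≠ 0 := fun h0 => by simp [h0] at h2
  have hroots : Multiset.card q.roots = 2 := by rw [splits_iff_card_roots.1 h, hd]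
  have : ∃ x, x ∈ q.roots := Multiset.card_pos_iff_exists_mem.1 (by omega)
  obtain ⟨x, hx⟩ := this
  have hev : q.eval x = 0 := (Polynomial.mem_roots hq0).1 hx
  have hev' : q.coeff 0 + q.coeff 1 * x + q.coeff 2 * x^2 = 0 := by
    have h3 : q.natDegree < 3 := by omega
    have := Polynomial.eval_eq_sum_range' h3 x
    rw [this] at hev
    simpa [Finset.sum_range_succ] using hev
  have h4 : 4 * q.coeff 2 * (q.coeff 0 + q.coeff 1 * x + q.coeff 2 * x^2) = 0 := by
    rw [hev']; ring
  nlinarith [sq_nonneg (2 * q.coeff 2 * x + q.coeff 1), h4]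

end NewtonAux

namespace NewtonAux

lemma descPos {n k : ℕ} (h : k ≤ n) : 0 < n.descFactorial k :=
  Nat.pos_of_ne_zero (fun h0 => by
    rw [Nat.descFactorial_eq_zero_iff_lt] at h0; omega)

theorem newton_multiset (s r : ℕ) (t : Multiset ℝ) (ht : Multiset.card t = s + r + 2) :
    t.esymm s * t.esymm (s+2) * ((s+r+2).choose (s+1) : ℝ)^2 ≤
      (t.esymm (s+1))^2 * (((s+r+2).choose s : ℝ) * ((s+r+2).choose (s+2))) := by
  -- p1
  set p1 : ℝ[X] := (t.map fun a => X - C a).prod with hp1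
  have hd1 : p1.natDegree = s + r + 2 := by
    rw [hp1, natDegree_multiset_prod_X_sub_C_eq_card, ht]
  have hroots1 : p1.roots = t := roots_multiset_prod_X_sub_C t
  have hsp1 : p1.Splits := by
    rw [splits_iff_card_roots, hroots1, ht, hd1]
  have hc1 : ∀ j, j ≤ s + r + 2 → p1.coeff j = (-1)^(s+r+2-j) * t.esymm (s+r+2-j) := by
    intro j hj
    have := Multiset.prod_X_sub_C_coeff t (k := j) (by omega)
    rw [ht] at this
    exact this
  -- p2
  set p2 : ℝ[X] := derivative^[r] p1 with hp2
  have hsp2 : p2.Splits := splits_iterate_derivative r _ hsp1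
  have hc2 : ∀ j, j ≤ s + 2 →
      p2.coeff j = ((j+r).descFactorial r : ℝ) * ((-1)^(s+2-j) * t.esymm (s+2-j)) := by
    intro j hj
    rw [hp2, Polynomial.coeff_iterate_derivative, hc1 (j+r) (by omega), nsmul_eq_mul,
      show s+r+2-(j+r) = s+2-j from by omega]
  have hc2top : p2.coeff (s+2) = ((s+2+r).descFactorial r : ℝ) := by
    rw [hc2 (s+2) le_rfl]
    simp [esymm_zero']
  have htoppos : (0:ℝ) < ((s+2+r).descFactorial r : ℝ) := by
    exact_mod_cast descPos (by omega)
  have hd2 : p2.natDegree = s + 2 := by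
    refine le_antisymm ?_ (Polynomial.le_natDegree_of_ne_zero (by rw [hc2top]; positivity))
    have h := Polynomial.natDegree_iterate_derivative p1 r
    rw [← hp2, hd1] at h
    omega
  set L : ℝ := p2.leadingCoeff with hLdef
  have hL : L = ((s+2+r).descFactorial r : ℝ) := by
    rw [hLdef, Polynomial.leadingCoeff, hd2, hc2top]
  have hLpos : 0 < L := hL ▸ htoppos
  set u : Multiset ℝ := p2.roots with hu
  have hV : ∀ j, j ≤ s + 2 → p2.coeff j = L * ((-1)^(s+2-j) * u.esymm (s+2-j)) := by
    intro j hj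
    have := Polynomial.coeff_eq_esymm_roots_of_splits hsp2 (k := j) (by omega)
    rw [hd2] at this
    rw [this]; ring
  have hLu : ∀ i, i ≤ s + 2 →
      L * u.esymm i = ((s+2-i+r).descFactorial r : ℝ) * t.esymm i := by
    intro i hi
    have h1 := hV (s+2-i) (by omega)
    have h2 := hc2 (s+2-i) (by omega)
    have he : s + 2 - (s+2-i) = i := by omega
    rw [he] at h1 h2
    have hne : ((-1:ℝ))^i ≠ 0 := pow_ne_zero _ (by norm_num)
    apply mul_left_cancel₀ hne
    have h3 := h1.symm.trans h2
    linear_combination h3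
  -- p3
  set p3 : ℝ[X] := (u.map fun a => 1 - C a * X).prod with hp3
  have hsp3 : p3.Splits := splits_prod_one_sub u
  have hc3 : ∀ i, p3.coeff i = (-1)^i * u.esymm i := coeff_prod_one_sub u
  have hdeg3 : p3.natDegree ≤ s + 2 := by
    have hcardu : Multiset.card u = s + 2 := by
      rw [hu, splits_iff_card_roots.1 hsp2, hd2]
    calc p3.natDegree ≤ ((u.map fun a => 1 - C a * X).map natDegree).sum :=
          Polynomial.natDegree_multiset_prod_le _
      _ ≤ Multiset.card ((u.map fun a => 1 - C a * X).map natDegree) • 1 := by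
          apply Multiset.sum_le_card_nsmul
          intro x hx
          obtain ⟨q, hq, rfl⟩ := Multiset.mem_map.1 hx
          obtain ⟨a, _, rfl⟩ := Multiset.mem_map.1 hq
          calc (1 - C a * X).natDegree ≤ max (1:ℝ[X]).natDegree (C a * X).natDegree :=
                natDegree_sub_le _ _
            _ ≤ 1 := by
                simp only [natDegree_one, max_le_iff]
                exact ⟨Nat.zero_le _, (natDegree_C_mul_le _ _).trans (by simp)⟩
      _ = s + 2 := by simp [hcardu]
  -- p4
  set p4 : ℝ[X] := derivative^[s] p3 with hp4
  have hsp4 : p4.Splits := splits_iterate_derivative s _ hsp3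
  have hdeg4 : p4.natDegree ≤ 2 := by
    have h := Polynomial.natDegree_iterate_derivative p3 s
    rw [← hp4] at h
    omega
  have hc4 : ∀ j, p4.coeff j = ((j+s).descFactorial s : ℝ) * ((-1)^(j+s) * u.esymm (j+s)) := by
    intro j
    rw [hp4, Polynomial.coeff_iterate_derivative, hc3, nsmul_eq_mul]
  have hdisc := quadratic_disc p4 hsp4 hdeg4
  have hm : 4 * ((p4.coeff 2 * L) * (p4.coeff 0 * L)) ≤ (p4.coeff 1 * L)^2 := by
    calc 4 * ((p4.coeff 2 * L) * (p4.coeff 0 * L)) = 4 * (p4.coeff 2 * p4.coeff 0) * L^2 := by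
          ring
      _ ≤ (p4.coeff 1)^2 * L^2 := mul_le_mul_of_nonneg_right hdisc (sq_nonneg L)
      _ = (p4.coeff 1 * L)^2 := by ring
  -- substitute coefficients
  have hLu2 : L * u.esymm (2+s) = ((r).descFactorial r : ℝ) * t.esymm (2+s) := by
    have h := hLu (2+s) (by omega)
    rw [show s+2-(2+s)+r = r from by omega] at h
    exact h
  have hLu1 : L * u.esymm (1+s) = ((r+1).descFactorial r : ℝ) * t.esymm (1+s) := by
    have h := hLu (1+s) (by omega)
    rw [show s+2-(1+s)+r = r+1 from by omega] at h
    exact h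
  have hLu0 : L * u.esymm (0+s) = ((r+2).descFactorial r : ℝ) * t.esymm (0+s) := by
    have h := hLu (0+s) (by omega)
    rw [show s+2-(0+s)+r = r+2 from by omega] at h
    exact h
  have hq2 : p4.coeff 2 * L = (-1)^(2+s) *
      (((2+s).descFactorial s : ℝ) * (((r).descFactorial r : ℝ) * t.esymm (2+s))) := by
    linear_combination L * (hc4 2) + ((-1:ℝ)^(2+s) * ((2+s).descFactorial s : ℝ)) * hLu2
  have hq1 : p4.coeff 1 * L = (-1)^(1+s) *
      (((1+s).descFactorial s : ℝ) * (((r+1).descFactorial r : ℝ) * t.esymm (1+s))) := by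
    linear_combination L * (hc4 1) + ((-1:ℝ)^(1+s) * ((1+s).descFactorial s : ℝ)) * hLu1
  have hq0 : p4.coeff 0 * L = (-1)^(0+s) *
      (((0+s).descFactorial s : ℝ) * (((r+2).descFactorial r : ℝ) * t.esymm (0+s))) := by
    linear_combination L * (hc4 0) + ((-1:ℝ)^(0+s) * ((0+s).descFactorial s : ℝ)) * hLu0
  have hev2 : ((-1:ℝ))^(2+s) * ((-1:ℝ))^(0+s) = 1 := by
    rw [← pow_add]
    exact Even.neg_one_pow ⟨s + 1, by ring⟩
  have hev1 : (((-1:ℝ))^(1+s))^2 = 1 := by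
    rw [← pow_mul]
    exact Even.neg_one_pow ⟨1 + s, by ring⟩
  have master : 4 * ((((2+s).descFactorial s : ℝ) * ((r).descFactorial r : ℝ))
        * (((0+s).descFactorial s : ℝ) * (((r+2).descFactorial r : ℝ))))
        * (t.esymm (2+s) * t.esymm (0+s)) ≤
      ((((1+s).descFactorial s : ℝ)) * (((r+1).descFactorial r : ℝ)))^2
        * (t.esymm (1+s))^2 := by
    calc 4 * ((((2+s).descFactorial s : ℝ) * ((r).descFactorial r : ℝ))
          * (((0+s).descFactorial s : ℝ) * (((r+2).descFactorial r : ℝ))))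
          * (t.esymm (2+s) * t.esymm (0+s))
        = 4 * ((p4.coeff 2 * L) * (p4.coeff 0 * L)) := by
          rw [hq2, hq0]
          linear_combination (-(4 * (((2+s).descFactorial s : ℝ) * (((r).descFactorial r : ℝ) * t.esymm (2+s)))
            * (((0+s).descFactorial s : ℝ) * (((r+2).descFactorial r : ℝ) * t.esymm (0+s))))) * hev2
      _ ≤ (p4.coeff 1 * L)^2 := hm
      _ = ((((1+s).descFactorial s : ℝ)) * (((r+1).descFactorial r : ℝ)))^2 * (t.esymm (1+s))^2 := by
          rw [hq1]
          linear_combination ((((1+s).descFactorial s : ℝ) * (((r+1).descFactorial r : ℝ) * t.esymm (1+s)))^2) * hev1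
  rw [show (0+s) = s from by omega, show (2+s) = s+2 from by omega,
      show (1+s) = s+1 from by omega] at master
  -- the constant identity
  have hid : ((s+r+2).choose s : ℝ) * ((s+r+2).choose (s+2) : ℝ)
      * (4 * ((((s+2).descFactorial s : ℝ) * ((r).descFactorial r : ℝ))
          * (((s).descFactorial s : ℝ) * (((r+2).descFactorial r : ℝ))))) =
      ((s+r+2).choose (s+1) : ℝ)^2
        * ((((s+1).descFactorial s : ℝ)) * (((r+1).descFactorial r : ℝ)))^2 := by
    rw [Nat.descFactorial_self, Nat.descFactorial_self,
        Nat.descFactorial_eq_factorial_mul_choose (s+2) s,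
        Nat.descFactorial_eq_factorial_mul_choose (s+1) s,
        Nat.descFactorial_eq_factorial_mul_choose (r+2) r,
        Nat.descFactorial_eq_factorial_mul_choose (r+1) r]
    push_cast
    rw [Nat.cast_choose ℝ (show s ≤ s+r+2 by omega),
        Nat.cast_choose ℝ (show s+1 ≤ s+r+2 by omega),
        Nat.cast_choose ℝ (show s+2 ≤ s+r+2 by omega),
        Nat.cast_choose ℝ (show s ≤ s+2 by omega),
        Nat.cast_choose ℝ (show s ≤ s+1 by omega),
        Nat.cast_choose ℝ (show r ≤ r+2 by omega),
        Nat.cast_choose ℝ (show r ≤ r+1 by omega),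
        show s+r+2-s = r+2 from by omega, show s+r+2-(s+1) = r+1 from by omega,
        show s+r+2-(s+2) = r from by omega, show s+2-s = 2 from by omega,
        show s+1-s = 1 from by omega, show r+2-r = 2 from by omega,
        show r+1-r = 1 from by omega]
    have hne : ∀ m : ℕ, (Nat.factorial m : ℝ) ≠ 0 := fun m => by
      exact_mod_cast (Nat.factorial_pos m).ne'
    field_simp
    ring
  -- conclude
  have hpos : (0:ℝ) < ((((s+1).descFactorial s : ℝ)) * (((r+1).descFactorial r : ℝ)))^2 := by
    have h1 : (0:ℝ) < (((s+1).descFactorial s : ℝ)) := by exact_mod_cast descPos (by omega)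
    have h2 : (0:ℝ) < (((r+1).descFactorial r : ℝ)) := by exact_mod_cast descPos (by omega)
    positivity
  refine le_of_mul_le_mul_left ?_ hpos
  calc ((((s+1).descFactorial s : ℝ)) * (((r+1).descFactorial r : ℝ)))^2
        * (t.esymm s * t.esymm (s+2) * ((s+r+2).choose (s+1) : ℝ)^2)
      = (((s+r+2).choose s : ℝ) * ((s+r+2).choose (s+2) : ℝ))
        * ((4 * ((((s+2).descFactorial s : ℝ) * ((r).descFactorial r : ℝ))
            * (((s).descFactorial s : ℝ) * (((r+2).descFactorial r : ℝ)))))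
           * (t.esymm (s+2) * t.esymm s)) := by
        linear_combination (-(t.esymm s * t.esymm (s+2))) * hid
    _ ≤ (((s+r+2).choose s : ℝ) * ((s+r+2).choose (s+2) : ℝ))
        * (((((s+1).descFactorial s : ℝ)) * (((r+1).descFactorial r : ℝ)))^2
            * (t.esymm (s+1))^2) := by
        apply mul_le_mul_of_nonneg_left _ (by positivity)
        calc 4 * ((((s+2).descFactorial s : ℝ) * ((r).descFactorial r : ℝ))
              * (((s).descFactorial s : ℝ) * (((r+2).descFactorial r : ℝ))))
              * (t.esymm (s+2) * t.esymm s)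
            = 4 * ((((s+2).descFactorial s : ℝ) * ((r).descFactorial r : ℝ))
              * (((s).descFactorial s : ℝ) * (((r+2).descFactorial r : ℝ))))
              * (t.esymm (s+2) * t.esymm s) := rfl
          _ ≤ _ := by
              have := master
              linarith [master]
    _ = ((((s+1).descFactorial s : ℝ)) * (((r+1).descFactorial r : ℝ)))^2
        * ((t.esymm (s+1))^2 * (((s+r+2).choose s : ℝ) * ((s+r+2).choose (s+2) : ℝ))) := by
        ring

end NewtonAux


namespace NewtonAux

lemma chain (k l : ℕ) (hlk : l < k) (p : ℕ → ℝ) (hpos : ∀ m, m ≤ k → 0 < p m)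
    (hnw : ∀ m, 1 ≤ m → m + 1 ≤ k → p (m-1) * p (m+1) ≤ p m ^ 2) :
    ((k:ℝ) - l) ≤ (p k / p l) ^ (((k:ℝ) - l)⁻¹) *
      ((k:ℝ) * (p (k-1) / p k) - (l:ℝ) * (p (l-1) / p l)) := by
  -- anti-monotonicity of ratios
  have ratio_anti : ∀ m2, 1 ≤ m2 → m2 ≤ k → ∀ m1, 1 ≤ m1 → m1 ≤ m2 →
      p m2 * p (m1 - 1) ≤ p m1 * p (m2 - 1) := by
    intro m2
    induction m2 with
    | zero => omega
    | succ m ih =>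
      intro _ hm2k m1 hm1 hm12
      rcases Nat.lt_or_ge m1 (m+1) with hlt | hge
      · -- m1 ≤ m, use ih and newton at m
        have hm1m : m1 ≤ m := by omega
        have hmge : 1 ≤ m := by omega
        have ihm := ih hmge (by omega) m1 hm1 hm1m
        have hnwm := hnw m hmge (by omega)
        have h1 : 0 < p (m1 - 1) := hpos _ (by omega)
        have h2 : 0 < p (m - 1) := hpos _ (by omega)
        have h3 : 0 < p m := hpos _ (by omega)
        have key : p (m-1) * (p (m+1) * p (m1-1)) ≤ p (m-1) * (p m1 * p m) := by
          calc p (m-1) * (p (m+1) * p (m1-1)) = (p (m-1) * p (m+1)) * p (m1-1) := by ring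
            _ ≤ p m ^ 2 * p (m1-1) := mul_le_mul_of_nonneg_right hnwm h1.le
            _ = p m * (p m * p (m1-1)) := by ring
            _ ≤ p m * (p m1 * p (m-1)) := mul_le_mul_of_nonneg_left ihm h3.le
            _ = p (m-1) * (p m1 * p m) := by ring
        have := le_of_mul_le_mul_left key h2
        calc p (m+1) * p (m1-1) ≤ p m1 * p m := this
          _ = p m1 * p ((m+1) - 1) := by norm_num
      · -- m1 = m+1
        have : m1 = m + 1 := by omega
        subst this
        exact le_rfl
  have hd : 0 < k - l := by omega
  set d : ℕ := k - l with hdd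
  have hdR : ((k:ℝ) - l) = (d:ℝ) := by
    push_cast [hdd]
    have : (l:ℝ) ≤ k := by exact_mod_cast hlk.le
    push_cast [Nat.cast_sub hlk.le]
    ring
  set R : ℝ := p (l+1) / p l with hR
  set rk : ℝ := p k / p (k-1) with hrk
  have hplpos : 0 < p l := hpos _ (by omega)
  have hpkpos : 0 < p k := hpos _ (by omega)
  have hpk1pos : 0 < p (k-1) := hpos _ (by omega)
  have hpl1pos : 0 < p (l+1) := hpos _ (by omega)
  have hRpos : 0 < R := div_pos hpl1pos hplpos
  have hrkpos : 0 < rk := div_pos hpkpos hpk1pos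
  -- upper bound : p k ≤ p l * R ^ d
  have hupper : ∀ j, l ≤ j → j ≤ k → p j ≤ p l * R ^ (j - l) := by
    intro j hj hjk
    induction j, hj using Nat.le_induction with
    | base => simp [hplpos.le]
    | succ j hlj ih =>
      have hjk' : j ≤ k := by omega
      have hra := ratio_anti (j+1) (by omega) (by omega) (l+1) (by omega) (by omega)
      simp only [Nat.add_sub_cancel] at hra
      have hpjpos : 0 < p j := hpos _ (by omega)
      have step : p (j+1) ≤ p j * R := by
        rw [hR, mul_div_assoc']
        rw [le_div_iff₀ hplpos]
        calc p (j+1) * p l ≤ p (l+1) * p j := hra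
          _ = p j * p (l+1) := by ring
      calc p (j+1) ≤ p j * R := step
        _ ≤ (p l * R ^ (j - l)) * R := mul_le_mul_of_nonneg_right (ih hjk') hRpos.le
        _ = p l * R ^ (j + 1 - l) := by
            rw [show j + 1 - l = (j - l) + 1 from by omega, pow_succ]; ring
  -- lower bound : p l * rk ^ d ≤ p k
  have hlower : ∀ i, i ≤ k - l → p (k - i) * rk ^ i ≤ p k := by
    intro i
    induction i with
    | zero => simp
    | succ i ih =>
      intro hik
      have hra := ratio_anti k (by omega) le_rfl (k - i) (by omega) (by omega)
      have hkk : k - i - 1 = k - (i+1) := by omega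
      rw [hkk] at hra
      have step : p (k - (i+1)) * rk ≤ p (k - i) := by
        rw [hrk, mul_div_assoc']
        rw [div_le_iff₀ hpk1pos]
        calc p (k - (i+1)) * p k = p k * p (k - (i+1)) := by ring
          _ ≤ p (k - i) * p (k - 1) := hra
      calc p (k - (i+1)) * rk ^ (i+1) = (p (k - (i+1)) * rk) * rk ^ i := by
            rw [pow_succ]; ring
        _ ≤ p (k - i) * rk ^ i := mul_le_mul_of_nonneg_right step (by positivity)
        _ ≤ p k := ih (by omega)
  -- convert to rpow bounds on g
  set c : ℝ := ((k:ℝ) - l)⁻¹ with hc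
  have hcd : c = (d:ℝ)⁻¹ := by rw [hc, hdR]
  set g : ℝ := (p k / p l) ^ c with hg
  have hquotpos : 0 < p k / p l := div_pos hpkpos hplpos
  have hgpos : 0 < g := Real.rpow_pos_of_pos hquotpos _
  have hdne : (d:ℝ) ≠ 0 := by
    have : 0 < (d:ℝ) := by exact_mod_cast hd
    exact this.ne'
  have hgR : g ≤ R := by
    have h1 : p k / p l ≤ R ^ d := by
      rw [div_le_iff₀ hplpos]
      have := hupper k (by omega) le_rfl
      rw [← hdd] at this
      linarith [this]
    calc g = (p k / p l) ^ c := hg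
      _ ≤ (R ^ d) ^ c := by
          apply Real.rpow_le_rpow hquotpos.le h1
          rw [hcd]; positivity
      _ = R := by
          rw [← Real.rpow_natCast R d, ← Real.rpow_mul hRpos.le, hcd,
            mul_inv_cancel₀ hdne, Real.rpow_one]
  have hrkg : rk ≤ g := by
    have h1 : rk ^ d ≤ p k / p l := by
      rw [le_div_iff₀ hplpos]
      have := hlower d (le_refl _)
      rw [show k - d = l from by omega] at this
      linarith [this]
    calc rk = (rk ^ d) ^ c := by
          rw [← Real.rpow_natCast rk d, ← Real.rpow_mul hrkpos.le, hcd,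
            mul_inv_cancel₀ hdne, Real.rpow_one]
      _ ≤ (p k / p l) ^ c := by
          apply Real.rpow_le_rpow (by positivity) h1
          rw [hcd]; positivity
      _ = g := hg.symm
  -- the l-term
  have hlterm : (l:ℝ) * (p (l-1) / p l) ≤ (l:ℝ) / g := by
    rcases Nat.eq_zero_or_pos l with rfl | hl
    · simp
    · have hpl1 : 0 < p (l-1) := hpos _ (by omega)
      have hnwl := hnw l hl (by omega)
      -- p l / p (l-1) ≥ R ≥ g
      have hrl : R ≤ p l / p (l-1) := by
        rw [hR, div_le_div_iff₀ hplpos hpl1]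
        calc p (l+1) * p (l-1) = p (l-1) * p (l+1) := by ring
          _ ≤ p l ^ 2 := hnwl
          _ = p l * p l := by ring
      have hgrl : g ≤ p l / p (l-1) := hgR.trans hrl
      have h2 : g * p (l-1) ≤ p l := (le_div_iff₀ hpl1).1 hgrl
      have : p (l-1) / p l ≤ 1 / g := by
        rw [div_le_div_iff₀ hplpos hgpos]
        calc p (l-1) * g = g * p (l-1) := by ring
          _ ≤ p l := h2
          _ = 1 * p l := by ring
      calc (l:ℝ) * (p (l-1) / p l) ≤ (l:ℝ) * (1 / g) :=
            mul_le_mul_of_nonneg_left this (by positivity)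
        _ = (l:ℝ) / g := by ring
  have hkterm : (k:ℝ) / g ≤ (k:ℝ) * (p (k-1) / p k) := by
    have h1 : p (k-1) / p k = 1 / rk := by
      rw [hrk]; field_simp
    rw [h1]
    have : (1:ℝ) / g ≤ 1 / rk := by
      apply one_div_le_one_div_of_le hrkpos hrkg
    calc (k:ℝ) / g = (k:ℝ) * (1 / g) := by ring
      _ ≤ (k:ℝ) * (1 / rk) := mul_le_mul_of_nonneg_left this (by positivity)
  calc ((k:ℝ) - l) = g * (((k:ℝ) - l) / g) := by field_simp
    _ ≤ g * ((k:ℝ) * (p (k-1) / p k) - (l:ℝ) * (p (l-1) / p l)) := by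
        apply mul_le_mul_of_nonneg_left _ hgpos.le
        have : ((k:ℝ) - l) / g = (k:ℝ)/g - (l:ℝ)/g := by ring
        rw [this]
        have := hlterm
        have := hkterm
        linarith
    _ = (p k / p l) ^ c * ((k:ℝ) * (p (k-1) / p k) - (l:ℝ) * (p (l-1) / p l)) := by rw [hg]

end NewtonAux

namespace NewtonAux

lemma esymm_eq_multiset (n m : ℕ) (μ : Fin n → ℝ) :
    (Finset.univ.val.map μ).esymm m = esymm n m μ := by
  rw [Finset.esymm_map_val]; rfl

lemma esymm_zero_eq (n : ℕ) (μ : Fin n → ℝ) : esymm n 0 μ = 1 := by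
  simp [esymm]

lemma newton_esymm (n m : ℕ) (hm : 1 ≤ m) (hmn : m + 1 ≤ n) (μ : Fin n → ℝ) :
    esymm n (m-1) μ * esymm n (m+1) μ * ((n.choose m : ℝ))^2 ≤
      (esymm n m μ)^2 * ((n.choose (m-1) : ℝ) * (n.choose (m+1) : ℝ)) := by
  obtain ⟨s, rfl⟩ : ∃ s, m = s + 1 := ⟨m-1, by omega⟩
  obtain ⟨r, hn⟩ : ∃ r, n = s + r + 2 := ⟨n - s - 2, by omega⟩
  subst hn
  have hmain := newton_multiset s r (Finset.univ.val.map μ) (by simp)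
  rw [esymm_eq_multiset, esymm_eq_multiset, esymm_eq_multiset] at hmain
  simpa using hmain

lemma esymm_differentiableAt (n m : ℕ) (μ : Fin n → ℝ) :
    DifferentiableAt ℝ (esymm n m) μ := by
  have h : esymm n m =
      fun ν : Fin n → ℝ => ∑ s ∈ Finset.powersetCard m Finset.univ, ∏ i ∈ s, ν i := rfl
  rw [h]
  apply DifferentiableAt.fun_sum
  intro s _
  exact (HasFDerivAt.finset_prod
    (fun i _ => (ContinuousLinearMap.proj (R := ℝ) (φ := fun _ : Fin n => ℝ) i).hasFDerivAt
      (x := μ))).differentiableAt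

lemma comb_identity (n m : ℕ) (hm : 1 ≤ m) (hmn : m ≤ n) (μ : Fin n → ℝ) :
    ∑ s ∈ powersetCard m (univ : Finset (Fin n)), ∑ i ∈ s, ∏ j ∈ s.erase i, μ j
      = ((n - m + 1 : ℕ) : ℝ) * esymm n (m-1) μ := by
  have hrhs : ((n - m + 1 : ℕ) : ℝ) * esymm n (m-1) μ =
      ∑ t ∈ powersetCard (m-1) (univ : Finset (Fin n)), ∑ _i ∈ univ \ t, ∏ j ∈ t, μ j := by
    rw [esymm, Finset.mul_sum]
    apply Finset.sum_congr rfl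
    intro t ht
    rw [Finset.sum_const, nsmul_eq_mul]
    congr 1
    have hc := (Finset.mem_powersetCard.1 ht).2
    rw [Finset.card_sdiff_of_subset (Finset.subset_univ t), Finset.card_univ, Fintype.card_fin, hc]
    congr 1
    omega
  rw [hrhs, Finset.sum_sigma', Finset.sum_sigma']
  apply Finset.sum_nbij' (i := fun a => (⟨a.1.erase a.2, a.2⟩ : Σ _t : Finset (Fin n), Fin n))
    (j := fun b => (⟨insert b.2 b.1, b.2⟩ : Σ _s : Finset (Fin n), Fin n))
  · intro a ha
    rw [Finset.mem_sigma] at ha ⊢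
    obtain ⟨hs, hi⟩ := ha
    rw [Finset.mem_powersetCard] at hs
    constructor
    · rw [Finset.mem_powersetCard]
      exact ⟨Finset.subset_univ _, by rw [Finset.card_erase_of_mem hi, hs.2]⟩
    · simp [Finset.mem_sdiff]
  · intro b hb
    rw [Finset.mem_sigma] at hb ⊢
    obtain ⟨ht, hi⟩ := hb
    rw [Finset.mem_powersetCard] at ht
    rw [Finset.mem_sdiff] at hi
    constructor
    · rw [Finset.mem_powersetCard]
      refine ⟨Finset.subset_univ _, ?_⟩
      rw [Finset.card_insert_of_notMem hi.2, ht.2]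
      omega
    · exact Finset.mem_insert_self _ _
  · intro a ha
    rw [Finset.mem_sigma] at ha
    exact Sigma.ext (by simp [Finset.insert_erase ha.2]) (by simp)
  · intro b hb
    rw [Finset.mem_sigma] at hb
    rw [Finset.mem_sdiff] at hb
    exact Sigma.ext (by simp [Finset.erase_insert hb.2.2]) (by simp)
  · intro a ha
    rfl

lemma hasDerivAt_esymm_line (n m : ℕ) (hm : 1 ≤ m) (hmn : m ≤ n) (μ : Fin n → ℝ) :
    HasDerivAt (fun t : ℝ => esymm n m (fun i => μ i + t))
      (((n - m + 1 : ℕ) : ℝ) * esymm n (m-1) μ) 0 := by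
  have h1 : ∀ s ∈ Finset.powersetCard m (univ : Finset (Fin n)),
      HasDerivAt (fun t : ℝ => ∏ i ∈ s, (μ i + t)) (∑ i ∈ s, ∏ j ∈ s.erase i, μ j) 0 := by
    intro s _
    have h := HasDerivAt.fun_finset_prod (u := s) (f := fun i (t : ℝ) => μ i + t)
      (f' := fun _ => 1) (x := 0) (fun i _ => (hasDerivAt_id (0:ℝ)).const_add (μ i))
    simpa [add_zero] using h
  have h2 := HasDerivAt.fun_sum h1
  rw [comb_identity n m hm hmn μ] at h2
  exact h2

theorem stmt_2' (n k l : ℕ) (hl : l < k) (hkn : k ≤ n)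
    (μ : Fin n → ℝ) (hΓ : ∀ j, 1 ≤ j → j ≤ k → 0 < esymm n j μ) :
    ((n.choose k : ℝ) / (n.choose l : ℝ)) ^ ((((k : ℝ) - l))⁻¹) ≤
      ∑ i : Fin n, fderiv ℝ (Gq n k l) μ (Pi.single i 1) := by
  have hk1 : 1 ≤ k := by omega
  set c : ℝ := (((k : ℝ) - l))⁻¹ with hc
  set A : ℝ := esymm n k μ with hA
  set B : ℝ := esymm n l μ with hB
  have hApos : 0 < A := hΓ k hk1 le_rfl
  have hBpos : 0 < B := by
    rcases Nat.eq_zero_or_pos l with rfl | hlpos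
    · rw [hB, esymm_zero_eq]; norm_num
    · exact hΓ l hlpos hl.le
  have hQpos : 0 < A / B := div_pos hApos hBpos
  -- differentiability of Gq at μ
  have hdiffQ : DifferentiableAt ℝ (fun ν => esymm n k ν / esymm n l ν) μ := by
    have h := (esymm_differentiableAt n k μ).fun_mul
      ((esymm_differentiableAt n l μ).fun_inv hBpos.ne')
    simpa [div_eq_mul_inv] using h
  have hdiffG : DifferentiableAt ℝ (Gq n k l) μ := by
    have := hdiffQ.rpow_const (p := c) (Or.inl hQpos.ne')
    exact this
  -- sum of partials equals derivative in direction 1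
  have hsum : ∑ i : Fin n, fderiv ℝ (Gq n k l) μ (Pi.single i 1)
      = fderiv ℝ (Gq n k l) μ (fun _ => 1) := by
    rw [← map_sum]
    congr 1
    exact Finset.univ_sum_single (fun _ => (1:ℝ))
  -- line through μ
  set γ : ℝ → (Fin n → ℝ) := fun t => fun i => μ i + t with hγ
  have hγd : HasDerivAt γ (fun _ => (1:ℝ)) 0 := by
    rw [hasDerivAt_pi]
    intro i
    exact (hasDerivAt_id (0:ℝ)).const_add (μ i)
  have hγ0 : γ 0 = μ := by funext i; simp [hγ]
  have hcomp : HasDerivAt (fun t => Gq n k l (γ t)) (fderiv ℝ (Gq n k l) μ (fun _ => 1)) 0 := by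
    have hF : HasFDerivAt (Gq n k l) (fderiv ℝ (Gq n k l) μ) (γ 0) := by
      rw [hγ0]; exact hdiffG.hasFDerivAt
    exact hF.comp_hasDerivAt 0 hγd
  -- normalized symmetric functions
  set p : ℕ → ℝ := fun m => esymm n m μ / (n.choose m : ℝ) with hp
  have hchoosepos : ∀ m, m ≤ n → (0:ℝ) < (n.choose m : ℝ) := fun m hmn => by
    exact_mod_cast Nat.choose_pos hmn
  have hppos : ∀ m, m ≤ k → 0 < p m := by
    intro m hmk
    rcases Nat.eq_zero_or_pos m with rfl | hm1
    · rw [hp]; simp [esymm_zero_eq]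
    · exact div_pos (hΓ m hm1 hmk) (hchoosepos m (by omega))
  have hnw : ∀ m, 1 ≤ m → m + 1 ≤ k → p (m-1) * p (m+1) ≤ p m ^ 2 := by
    intro m hm1 hmk
    have hnewt := newton_esymm n m hm1 (by omega) μ
    have c1 : (0:ℝ) < (n.choose (m-1) : ℝ) := hchoosepos _ (by omega)
    have c2 : (0:ℝ) < (n.choose (m+1) : ℝ) := hchoosepos _ (by omega)
    have c3 : (0:ℝ) < (n.choose m : ℝ) := hchoosepos _ (by omega)
    rw [hp]
    rw [div_mul_div_comm, div_pow, div_le_div_iff₀ (by positivity) (by positivity)]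
    calc esymm n (m-1) μ * esymm n (m+1) μ * ((n.choose m : ℝ))^2 ≤
          (esymm n m μ)^2 * ((n.choose (m-1) : ℝ) * (n.choose (m+1) : ℝ)) := hnewt
      _ = esymm n m μ ^ 2 * ((n.choose (m-1) : ℝ) * (n.choose (m+1) : ℝ)) := by ring
  -- derivatives along the line
  have hAline : HasDerivAt (fun t => esymm n k (γ t))
      ((k : ℝ) * (n.choose k : ℝ) * p (k-1)) 0 := by
    have h := hasDerivAt_esymm_line n k hk1 hkn μ
    have hval : ((n - k + 1 : ℕ) : ℝ) * esymm n (k-1) μ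
        = (k : ℝ) * (n.choose k : ℝ) * p (k-1) := by
      have hid : (n - k + 1) * (n.choose (k-1)) = k * n.choose k := by
        have h := Nat.choose_succ_right_eq n (k-1)
        rw [show k - 1 + 1 = k from by omega] at h
        rw [show n - (k-1) = n - k + 1 from by omega] at h
        calc (n - k + 1) * (n.choose (k-1)) = n.choose (k-1) * (n - k + 1) := Nat.mul_comm _ _
          _ = n.choose k * k := h.symm
          _ = k * n.choose k := Nat.mul_comm _ _
      have hcc : (0:ℝ) < (n.choose (k-1) : ℝ) := hchoosepos _ (by omega)
      have hesymm : esymm n (k-1) μ = (n.choose (k-1) : ℝ) * p (k-1) := by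
        rw [hp]; field_simp
      rw [hesymm]
      have : ((n - k + 1 : ℕ) : ℝ) * (n.choose (k-1) : ℝ) = (k : ℝ) * (n.choose k : ℝ) := by
        exact_mod_cast congrArg (Nat.cast : ℕ → ℝ) hid
      calc ((n - k + 1 : ℕ) : ℝ) * ((n.choose (k-1) : ℝ) * p (k-1))
          = (((n - k + 1 : ℕ) : ℝ) * (n.choose (k-1) : ℝ)) * p (k-1) := by ring
        _ = ((k : ℝ) * (n.choose k : ℝ)) * p (k-1) := by rw [this]
        _ = (k : ℝ) * (n.choose k : ℝ) * p (k-1) := by ring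
    rw [← hval]
    exact h
  have hBline : HasDerivAt (fun t => esymm n l (γ t))
      ((l : ℝ) * (n.choose l : ℝ) * p (l-1)) 0 := by
    rcases Nat.eq_zero_or_pos l with rfl | hlpos
    · simp only [Nat.cast_zero, zero_mul]
      have : (fun t => esymm n 0 (γ t)) = fun _ : ℝ => (1:ℝ) := by
        funext t; rw [esymm_zero_eq]
      rw [this]
      exact hasDerivAt_const 0 1
    · have h := hasDerivAt_esymm_line n l hlpos (by omega) μ
      have hid : (n - l + 1) * (n.choose (l-1)) = l * n.choose l := by
        have h := Nat.choose_succ_right_eq n (l-1)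
        rw [show l - 1 + 1 = l from by omega] at h
        rw [show n - (l-1) = n - l + 1 from by omega] at h
        calc (n - l + 1) * (n.choose (l-1)) = n.choose (l-1) * (n - l + 1) := Nat.mul_comm _ _
          _ = n.choose l * l := h.symm
          _ = l * n.choose l := Nat.mul_comm _ _
      have hcc : (0:ℝ) < (n.choose (l-1) : ℝ) := hchoosepos _ (by omega)
      have hval : ((n - l + 1 : ℕ) : ℝ) * esymm n (l-1) μ
          = (l : ℝ) * (n.choose l : ℝ) * p (l-1) := by
        have hesymm : esymm n (l-1) μ = (n.choose (l-1) : ℝ) * p (l-1) := by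
          rw [hp]; field_simp
        rw [hesymm]
        have hcast : ((n - l + 1 : ℕ) : ℝ) * (n.choose (l-1) : ℝ) = (l : ℝ) * (n.choose l : ℝ) := by
          exact_mod_cast congrArg (Nat.cast : ℕ → ℝ) hid
        calc ((n - l + 1 : ℕ) : ℝ) * ((n.choose (l-1) : ℝ) * p (l-1))
            = (((n - l + 1 : ℕ) : ℝ) * (n.choose (l-1) : ℝ)) * p (l-1) := by ring
          _ = (l : ℝ) * (n.choose l : ℝ) * p (l-1) := by rw [hcast]
      rw [← hval]
      exact h
  -- quotient and rpow derivative along the line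
  set a' : ℝ := (k : ℝ) * (n.choose k : ℝ) * p (k-1) with ha'
  set b' : ℝ := (l : ℝ) * (n.choose l : ℝ) * p (l-1) with hb'
  have hγA : esymm n k (γ 0) = A := by rw [hγ0]
  have hγB : esymm n l (γ 0) = B := by rw [hγ0]
  have hquot : HasDerivAt (fun t => esymm n k (γ t) / esymm n l (γ t))
      ((a' * B - A * b') / B ^ 2) 0 := by
    have h := hAline.div hBline (by rw [hγB]; exact hBpos.ne')
    rw [hγA, hγB] at h
    exact h
  have hrpow : HasDerivAt (fun t => (esymm n k (γ t) / esymm n l (γ t)) ^ c)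
      ((a' * B - A * b') / B ^ 2 * c * (A / B) ^ (c - 1)) 0 := by
    have h := hquot.rpow_const (p := c) (by rw [hγA, hγB]; exact Or.inl hQpos.ne')
    rw [hγA, hγB] at h
    exact h
  have huniq : fderiv ℝ (Gq n k l) μ (fun _ => 1)
      = (a' * B - A * b') / B ^ 2 * c * (A / B) ^ (c - 1) := by
    exact hcomp.unique hrpow
  rw [hsum, huniq]
  -- final inequality
  have hkey := chain k l hl p hppos hnw
  have hklpos : (0:ℝ) < (k:ℝ) - l := by
    have : (l:ℝ) < (k:ℝ) := by exact_mod_cast hl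
    linarith
  have hcpos : 0 < c := by rw [hc]; positivity
  have hCK : (0:ℝ) < (n.choose k : ℝ) := hchoosepos _ hkn
  have hCL : (0:ℝ) < (n.choose l : ℝ) := hchoosepos _ (by omega)
  have hpk : 0 < p k := hppos k le_rfl
  have hpl : 0 < p l := hppos l (by omega)
  have hAeq : A = (n.choose k : ℝ) * p k := by rw [hp, hA]; field_simp
  have hBeq : B = (n.choose l : ℝ) * p l := by rw [hp, hB]; field_simp
  set W : ℝ := (k:ℝ) * (p (k-1) / p k) - (l:ℝ) * (p (l-1) / p l) with hW
  have hQne : A / B ≠ 0 := hQpos.ne'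
  have hstep1 : (A / B) ^ (c - 1) = (A / B) ^ c / (A / B) := by
    rw [Real.rpow_sub hQpos, Real.rpow_one]
  have hstep2 : (A / B) ^ c = ((n.choose k : ℝ) / (n.choose l : ℝ)) ^ c * (p k / p l) ^ c := by
    rw [← Real.mul_rpow (by positivity) (by positivity)]
    congr 1
    rw [hAeq, hBeq]
    field_simp
  have hstep3 : (a' * B - A * b') / B ^ 2 = (A / B) * W := by
    rw [ha', hb', hAeq, hBeq, hW]
    field_simp
  have hVal : (a' * B - A * b') / B ^ 2 * c * (A / B) ^ (c - 1)
      = c * (((n.choose k : ℝ) / (n.choose l : ℝ)) ^ c) * ((p k / p l) ^ c * W) := by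
    rw [hstep3, hstep1, hstep2]
    field_simp
  rw [hVal]
  have hCKLpos : (0:ℝ) < ((n.choose k : ℝ) / (n.choose l : ℝ)) ^ c :=
    Real.rpow_pos_of_pos (by positivity) _
  calc ((n.choose k : ℝ) / (n.choose l : ℝ)) ^ c
      = c * ((n.choose k : ℝ) / (n.choose l : ℝ)) ^ c * ((k:ℝ) - l) := by
        rw [hc]; field_simp
    _ ≤ c * ((n.choose k : ℝ) / (n.choose l : ℝ)) ^ c * ((p k / p l) ^ c * W) := by
        apply mul_le_mul_of_nonneg_left _ (by positivity)
        exact hkey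
    _ = c * (((n.choose k : ℝ) / (n.choose l : ℝ)) ^ c) * ((p k / p l) ^ c * W) := by ring

end NewtonAux

theorem stmt_2 (n k l : ℕ) (hl : l < k) (hkn : k ≤ n)
    (μ : Fin n → ℝ) (hΓ : ∀ j, 1 ≤ j → j ≤ k → 0 < esymm n j μ) :
    ((n.choose k : ℝ) / (n.choose l : ℝ)) ^ ((((k : ℝ) - l))⁻¹) ≤
      ∑ i : Fin n, fderiv ℝ (Gq n k l) μ (Pi.single i 1) :=
  NewtonAux.stmt_2' n k l hl hkn μ hΓ
end

section
/- Let μ ∈ Γ_k with 0 ≤ l ≤ k−2 and suppose μ_i ≥ c > 0 for all i. Then σ_k(μ)/σ_l(μ) ≥ (C(n,k)/C(n,l)) c^{k-l}. -/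
open Finset

lemma card_supersets (n k l : ℕ) (hkn : k ≤ n) (hlk : l ≤ k)
    (T : Finset (Fin n)) (hT : T.card = l) :
    ((Finset.powersetCard k (Finset.univ : Finset (Fin n))).filter
      (fun S => T ⊆ S)).card = (n - l).choose (k - l) := by
  have hcard : (Finset.univ \ T : Finset (Fin n)).card = n - l := by
    rw [card_sdiff_of_subset (subset_univ T), hT, card_univ, Fintype.card_fin]
  rw [← hcard, ← Finset.card_powersetCard (k - l) (Finset.univ \ T)]
  apply Finset.card_nbij' (fun S => S \ T) (fun S' => S' ∪ T)
  · intro S hS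
    simp only [Finset.mem_coe, mem_filter, Finset.mem_powersetCard] at hS
    obtain ⟨⟨-, hSk⟩, hTS⟩ := hS
    rw [Finset.mem_coe, Finset.mem_powersetCard]
    exact ⟨sdiff_subset_sdiff (subset_univ S) le_rfl,
      by rw [card_sdiff_of_subset hTS, hSk, hT]⟩
  · intro S' hS'
    rw [Finset.mem_coe, Finset.mem_powersetCard] at hS'
    obtain ⟨hsub, hcardS'⟩ := hS'
    have hdisj : Disjoint S' T := by
      refine Finset.disjoint_left.mpr fun a ha hb => ?_
      exact (Finset.mem_sdiff.mp (hsub ha)).2 hb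
    simp only [Finset.mem_coe, mem_filter, Finset.mem_powersetCard]
    refine ⟨⟨subset_univ _, ?_⟩, subset_union_right⟩
    rw [Finset.card_union_of_disjoint hdisj, hcardS', hT]
    omega
  · intro S hS
    simp only [Finset.mem_coe, mem_filter, Finset.mem_powersetCard] at hS
    exact Finset.sdiff_union_of_subset hS.2
  · intro S' hS'
    rw [Finset.mem_coe, Finset.mem_powersetCard] at hS'
    have hdisj : Disjoint S' T := by
      refine Finset.disjoint_left.mpr fun a ha hb => ?_
      exact (Finset.mem_sdiff.mp (hS'.1 ha)).2 hb
    exact Finset.union_sdiff_cancel_right hdisj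

theorem stmt_12 (n k l : ℕ) (hl : l + 2 ≤ k) (hkn : k ≤ n)
    (μ : Fin n → ℝ) (hΓ : ∀ j, 1 ≤ j → j ≤ k → 0 < esymm n j μ)
    (c : ℝ) (hc : 0 < c) (hμc : ∀ i, c ≤ μ i) :
    ((n.choose k : ℝ) / (n.choose l : ℝ)) * c ^ (k - l)
      ≤ esymm n k μ / esymm n l μ := by
  have hlk : l ≤ k := by omega
  have hμpos : ∀ i, 0 < μ i := fun i => lt_of_lt_of_le hc (hμc i)
  -- positivity of esymm
  have hpos : ∀ m, m ≤ n → 0 < esymm n m μ := by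
    intro m hm
    apply Finset.sum_pos
    · intro s _
      exact Finset.prod_pos fun i _ => hμpos i
    · exact Finset.powersetCard_nonempty.mpr (by simpa [card_univ] using hm)
  have hσl : 0 < esymm n l μ := hpos l (le_trans hlk hkn)
  -- key double counting inequality
  have key : ((n - l).choose (k - l) : ℝ) * c ^ (k - l) * esymm n l μ
      ≤ (k.choose l : ℝ) * esymm n k μ := by
    have middle : ∀ S ∈ Finset.powersetCard k (Finset.univ : Finset (Fin n)),
        ∑ T ∈ Finset.powersetCard l S, (∏ i ∈ T, μ i) * c ^ (k - l)
          ≤ (k.choose l : ℝ) * ∏ i ∈ S, μ i := by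
      intro S hS
      rw [Finset.mem_powersetCard] at hS
      have step : ∀ T ∈ Finset.powersetCard l S,
          (∏ i ∈ T, μ i) * c ^ (k - l) ≤ ∏ i ∈ S, μ i := by
        intro T hT
        rw [Finset.mem_powersetCard] at hT
        have : ∏ i ∈ S, μ i = (∏ i ∈ T, μ i) * ∏ i ∈ S \ T, μ i := by
          rw [mul_comm, Finset.prod_sdiff hT.1]
        rw [this]
        apply mul_le_mul_of_nonneg_left _ (le_of_lt (Finset.prod_pos
          fun i _ => hμpos i))
        have hcard : (S \ T).card = k - l := by
          rw [card_sdiff_of_subset hT.1, hS.2, hT.2]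
        calc c ^ (k - l) = ∏ _i ∈ S \ T, c := by rw [Finset.prod_const, hcard]
          _ ≤ ∏ i ∈ S \ T, μ i :=
            Finset.prod_le_prod (fun i _ => hc.le) (fun i _ => hμc i)
      calc ∑ T ∈ Finset.powersetCard l S, (∏ i ∈ T, μ i) * c ^ (k - l)
          ≤ ∑ T ∈ Finset.powersetCard l S, ∏ i ∈ S, μ i :=
            Finset.sum_le_sum step
        _ = (k.choose l : ℝ) * ∏ i ∈ S, μ i := by
            rw [Finset.sum_const, Finset.card_powersetCard, hS.2, nsmul_eq_mul]
    have swap : ((n - l).choose (k - l) : ℝ) * c ^ (k - l) * esymm n l μ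
        = ∑ S ∈ Finset.powersetCard k (Finset.univ : Finset (Fin n)),
            ∑ T ∈ Finset.powersetCard l S, (∏ i ∈ T, μ i) * c ^ (k - l) := by
      have hPC : ∀ S : Finset (Fin n), Finset.powersetCard l S
          = (Finset.powersetCard l (Finset.univ : Finset (Fin n))).filter
              (fun T => T ⊆ S) := by
        intro S
        ext T
        simp only [Finset.mem_powersetCard, mem_filter]
        constructor
        · rintro ⟨h1, h2⟩; exact ⟨⟨subset_univ T, h2⟩, h1⟩
        · rintro ⟨⟨-, h2⟩, h1⟩; exact ⟨h1, h2⟩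
      calc ((n - l).choose (k - l) : ℝ) * c ^ (k - l) * esymm n l μ
          = ∑ T ∈ Finset.powersetCard l (Finset.univ : Finset (Fin n)),
              (((Finset.powersetCard k (Finset.univ : Finset (Fin n))).filter
                  (fun S => T ⊆ S)).card : ℝ) * ((∏ i ∈ T, μ i) * c ^ (k - l)) := by
            rw [esymm, Finset.mul_sum]
            apply Finset.sum_congr rfl
            intro T hT
            rw [Finset.mem_powersetCard] at hT
            rw [card_supersets n k l hkn hlk T hT.2]
            ring
        _ = ∑ T ∈ Finset.powersetCard l (Finset.univ : Finset (Fin n)),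
              ∑ S ∈ Finset.powersetCard k (Finset.univ : Finset (Fin n)),
                (if T ⊆ S then (∏ i ∈ T, μ i) * c ^ (k - l) else 0) := by
            apply Finset.sum_congr rfl
            intro T _
            rw [← Finset.sum_filter, Finset.sum_const, nsmul_eq_mul]
        _ = ∑ S ∈ Finset.powersetCard k (Finset.univ : Finset (Fin n)),
              ∑ T ∈ Finset.powersetCard l (Finset.univ : Finset (Fin n)),
                (if T ⊆ S then (∏ i ∈ T, μ i) * c ^ (k - l) else 0) :=
            Finset.sum_comm
        _ = ∑ S ∈ Finset.powersetCard k (Finset.univ : Finset (Fin n)),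
              ∑ T ∈ Finset.powersetCard l S, (∏ i ∈ T, μ i) * c ^ (k - l) := by
            apply Finset.sum_congr rfl
            intro S _
            rw [hPC S, Finset.sum_filter]
    calc ((n - l).choose (k - l) : ℝ) * c ^ (k - l) * esymm n l μ
        = ∑ S ∈ Finset.powersetCard k (Finset.univ : Finset (Fin n)),
            ∑ T ∈ Finset.powersetCard l S, (∏ i ∈ T, μ i) * c ^ (k - l) := swap
      _ ≤ ∑ S ∈ Finset.powersetCard k (Finset.univ : Finset (Fin n)),
            (k.choose l : ℝ) * ∏ i ∈ S, μ i := Finset.sum_le_sum middle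
      _ = (k.choose l : ℝ) * esymm n k μ := by rw [esymm, Finset.mul_sum]
  -- finish by arithmetic
  have hid : (n.choose k : ℝ) * (k.choose l : ℝ)
      = (n.choose l : ℝ) * ((n - l).choose (k - l) : ℝ) := by
    exact_mod_cast Nat.choose_mul (n := n) hlk
  have hnl : (0 : ℝ) < (n.choose l : ℝ) := by
    exact_mod_cast Nat.choose_pos (le_trans hlk hkn)
  have hkl : (0 : ℝ) < (k.choose l : ℝ) := by
    exact_mod_cast Nat.choose_pos hlk
  rw [le_div_iff₀ hσl, div_mul_eq_mul_div, div_mul_eq_mul_div, div_le_iff₀ hnl]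
  calc (n.choose k : ℝ) * c ^ (k - l) * esymm n l μ
      = ((n.choose k : ℝ) * (k.choose l : ℝ)) * c ^ (k - l) * esymm n l μ
          / (k.choose l : ℝ) := by field_simp
    _ = (n.choose l : ℝ) * (((n - l).choose (k - l) : ℝ) * c ^ (k - l)
          * esymm n l μ) / (k.choose l : ℝ) := by rw [hid]; ring_nf
    _ ≤ (n.choose l : ℝ) * ((k.choose l : ℝ) * esymm n k μ) / (k.choose l : ℝ) := by
        gcongr
    _ = esymm n k μ * (n.choose l : ℝ) := by field_simp
end
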